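/- For every n ≥ 1 and μ ≥ 2, the intersection set satisfies I^μ[2n] ⊇ (I^μ[n] + I^μ[n] + I^μ[n] + I^μ[n]) ∪ ⋃_{i=1}^{n} (I^μ[i] + {(2n)² − i²}), where sums of sets are setwise sums. -/

import Mathlib

/-- A μ-way latin square of order n: μ latin squares on symbols `Fin n` such that
in every cell the μ entries are all equal or pairwise distinct. -/
def IsMuWayLatinSquare {μ n : ℕ} (L : Fin μ → Fin n → Fin n → Fin n) : Prop :=
  (∀ m i, Function.Injective (L m i)) ∧
  (∀ m j, Function.Injective (fun i => L m i j)) ∧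
  (∀ i j, (∀ a b, L a i j = L b i j) ∨ Function.Injective (fun a => L a i j))

/-- A cell is fixed when the μ entries there coincide. -/
def IsFixedCell {μ n : ℕ} (L : Fin μ → Fin n → Fin n → Fin n) (i j : Fin n) : Prop :=
  ∀ a b, L a i j = L b i j

instance {μ n : ℕ} (L : Fin μ → Fin n → Fin n → Fin n) (i j : Fin n) :
    Decidable (IsFixedCell L i j) :=
  inferInstanceAs (Decidable (∀ a b, L a i j = L b i j))

/-- The number of fixed cells. -/
def numFixed {μ n : ℕ} (L : Fin μ → Fin n → Fin n → Fin n) : ℕ :=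
  (Finset.univ.filter fun p : Fin n × Fin n => IsFixedCell L p.1 p.2).card

/-- The number of fixed cells in row `i`. -/
def rowFixed {μ n : ℕ} (L : Fin μ → Fin n → Fin n → Fin n) (i : Fin n) : ℕ :=
  (Finset.univ.filter fun j : Fin n => IsFixedCell L i j).card

/-- The intersection spectrum `I^μ[n]`. -/
def Spectrum (μ n : ℕ) : Set ℕ :=
  {k | ∃ L : Fin μ → Fin n → Fin n → Fin n, IsMuWayLatinSquare L ∧ numFixed L = k}

open Finset Function

namespace Stmt10Aux


lemma mod_cancel_right {t a b r : ℕ} (ha : a < t) (hb : b < t)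
    (h : (r + a) % t = (r + b) % t) : a = b := by
  have h1 : a % t = b % t := Nat.ModEq.add_left_cancel' r h
  rwa [Nat.mod_eq_of_lt ha, Nat.mod_eq_of_lt hb] at h1

lemma mod_cancel_left {t a b r : ℕ} (ha : a < t) (hb : b < t)
    (h : (a + r) % t = (b + r) % t) : a = b := by
  rw [Nat.add_comm a r, Nat.add_comm b r] at h
  exact mod_cancel_right ha hb h

lemma card_filter_val_lt (N i : ℕ) (h : i ≤ N) :
    (Finset.univ.filter fun x : Fin N => (x : ℕ) < i).card = i := by
  rw [← Finset.card_range i]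
  apply Finset.card_bij (fun (x : Fin N) _ => (x : ℕ))
  · intro a ha
    simp only [mem_filter] at ha
    simpa using ha.2
  · intro a ha b hb hab
    exact Fin.ext hab
  · intro b hb
    simp only [Finset.mem_range] at hb
    exact ⟨⟨b, lt_of_lt_of_le hb h⟩, by simpa using hb, rfl⟩

/-- Completion of a latin rectangle to a latin square, via Hall's theorem. -/
lemma exists_complete (N : ℕ) (d : ℕ) : ∀ k (hkd : k + d = N) (R : Fin k → Fin N → Fin N),
    (∀ r, Injective (R r)) → (∀ c, Injective fun r => R r c) →
    ∃ M : Fin N → Fin N → Fin N, (∀ r, Injective (M r)) ∧ (∀ c, Injective fun r => M r c) ∧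
      ∀ (r : Fin k) (c : Fin N), M ⟨r.1, lt_of_lt_of_le r.isLt (Nat.le.intro hkd)⟩ c = R r c := by
  induction d with
  | zero =>
    intro k hkd R hrow hcol
    have hkN : k = N := by omega
    subst hkN
    exact ⟨R, hrow, hcol, fun r c => rfl⟩
  | succ d ih =>
    intro k hkd R hrow hcol
    have hkN : k < N := by omega
    set t' : Fin N → Finset (Fin N) := fun c => univ \ (univ.image fun r => R r c) with ht'
    have hmem_t' : ∀ (v : Fin N) c, v ∈ t' c ↔ ∀ r, R r c ≠ v := by
      intro v c
      simp [ht']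
    have hcard_t' : ∀ c, (t' c).card = N - k := by
      intro c
      rw [ht']
      rw [card_sdiff_of_subset (subset_univ _), card_univ, Fintype.card_fin,
        card_image_of_injective _ (hcol c), card_univ, Fintype.card_fin]
    have hbij : ∀ r : Fin k, Bijective (R r) := fun r =>
      (Finite.injective_iff_bijective).1 (hrow r)
    have hfiber : ∀ v : Fin N, (univ.filter fun c => v ∈ t' c).card = N - k := by
      intro v
      have hval : (univ.filter fun c => ¬ (v ∈ t' c)).card = k := by
        have heq : (univ.filter fun c => ¬ (v ∈ t' c))
            = univ.image (fun r : Fin k => (Equiv.ofBijective _ (hbij r)).symm v) := by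
          ext c
          simp only [mem_filter, mem_univ, true_and, mem_image, hmem_t']
          push_neg
          constructor
          · rintro ⟨r, hr⟩
            exact ⟨r, by rw [Equiv.symm_apply_eq]; exact hr.symm⟩
          · rintro ⟨r, rfl⟩
            exact ⟨r, (Equiv.ofBijective _ (hbij r)).apply_symm_apply v⟩
        rw [heq, card_image_of_injective, card_univ, Fintype.card_fin]
        intro r1 r2 h12
        have e1 : R r1 ((Equiv.ofBijective _ (hbij r1)).symm v) = v :=
          (Equiv.ofBijective _ (hbij r1)).apply_symm_apply v
        have e2 : R r2 ((Equiv.ofBijective _ (hbij r2)).symm v) = v :=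
          (Equiv.ofBijective _ (hbij r2)).apply_symm_apply v
        have h12' : (Equiv.ofBijective _ (hbij r1)).symm v
            = (Equiv.ofBijective _ (hbij r2)).symm v := h12
        rw [h12'] at e1
        exact hcol _ (e1.trans e2.symm)
      have htot := card_filter_add_card_filter_not (s := (univ : Finset (Fin N)))
        (p := fun c => v ∈ t' c)
      rw [card_univ, Fintype.card_fin] at htot
      omega
    have hall : ∀ s : Finset (Fin N), s.card ≤ (s.biUnion t').card := by
      intro s
      have e1 : ∑ c ∈ s, (t' c).card = s.card * (N - k) := by
        rw [Finset.sum_congr rfl fun c _ => hcard_t' c, Finset.sum_const, smul_eq_mul]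
      have e2 : ∑ c ∈ s, (t' c).card = ∑ v ∈ univ, (s.filter fun c => v ∈ t' c).card := by
        calc ∑ c ∈ s, (t' c).card
            = ∑ c ∈ s, ∑ v ∈ univ, (if v ∈ t' c then 1 else 0) := by
              refine sum_congr rfl fun c _ => ?_
              rw [← Finset.card_filter]
              congr 1
              ext v
              simp
          _ = ∑ v ∈ univ, ∑ c ∈ s, (if v ∈ t' c then 1 else 0) := Finset.sum_comm
          _ = ∑ v ∈ univ, (s.filter fun c => v ∈ t' c).card := by
              refine sum_congr rfl fun v _ => ?_
              rw [Finset.card_filter]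
      have e3 : ∑ v ∈ univ, (s.filter fun c => v ∈ t' c).card
          = ∑ v ∈ s.biUnion t', (s.filter fun c => v ∈ t' c).card := by
        symm
        apply Finset.sum_subset (subset_univ _)
        intro v _ hv
        simp only [card_eq_zero, filter_eq_empty_iff]
        intro c hc hvc
        exact hv (mem_biUnion.2 ⟨c, hc, hvc⟩)
      have e4 : ∑ v ∈ s.biUnion t', (s.filter fun c => v ∈ t' c).card
          ≤ (s.biUnion t').card * (N - k) := by
        calc ∑ v ∈ s.biUnion t', (s.filter fun c => v ∈ t' c).card
            ≤ ∑ _v ∈ s.biUnion t', (N - k) := by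
              refine sum_le_sum fun v _ => ?_
              rw [← hfiber v]
              exact card_le_card (filter_subset_filter _ (subset_univ s))
          _ = (s.biUnion t').card * (N - k) := by rw [sum_const, smul_eq_mul]
      have key : s.card * (N - k) ≤ (s.biUnion t').card * (N - k) := by omega
      exact Nat.le_of_mul_le_mul_right key (by omega)
    obtain ⟨f, hfinj, hfmem⟩ := (Finset.all_card_le_biUnion_card_iff_existsInjective' t').1 hall
    set R' : Fin (k + 1) → Fin N → Fin N := Fin.snoc R f with hR'
    have hrow' : ∀ r, Injective (R' r) := by
      intro r
      refine Fin.lastCases ?_ ?_ r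
      · simpa [hR', Fin.snoc_last] using hfinj
      · intro p
        simpa [hR', Fin.snoc_castSucc] using hrow p
    have hcol' : ∀ c, Injective fun r => R' r c := by
      intro c r1 r2 h12
      rcases Fin.eq_castSucc_or_eq_last r1 with ⟨p1, rfl⟩ | rfl <;>
        rcases Fin.eq_castSucc_or_eq_last r2 with ⟨p2, rfl⟩ | rfl
      · simp only [hR', Fin.snoc_castSucc] at h12
        exact congrArg _ (hcol c h12)
      · exfalso
        simp only [hR', Fin.snoc_castSucc, Fin.snoc_last] at h12
        exact (hmem_t' (f c) c).1 (hfmem c) p1 h12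
      · exfalso
        simp only [hR', Fin.snoc_castSucc, Fin.snoc_last] at h12
        exact (hmem_t' (f c) c).1 (hfmem c) p2 h12.symm
      · rfl
    obtain ⟨M, hM1, hM2, hMtop⟩ := ih (k + 1) (by omega) R' hrow' hcol'
    refine ⟨M, hM1, hM2, fun r c => ?_⟩
    have h1 := hMtop (Fin.castSucc r) c
    rw [hR', Fin.snoc_castSucc] at h1
    exact h1


/-- The `i × N` latin rectangle extending a latin square of order `i`. -/
def baseRect (i N : ℕ) (h : 2 * i ≤ N) (L0 : Fin i → Fin i → Fin i) :
    Fin i → Fin N → Fin N := fun r c =>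
  if hc : (c : ℕ) < i then ⟨(L0 r ⟨c.1, hc⟩ : ℕ), by
    have := (L0 r ⟨c.1, hc⟩).isLt; omega⟩
  else ⟨i + ((r.1 + (c.1 - i)) % (N - i)), by
    have h0 : 0 < N := c.pos
    have h1 : (r.1 + (c.1 - i)) % (N - i) < N - i := Nat.mod_lt _ (by omega)
    omega⟩

lemma baseRect_row_inj {i N : ℕ} (h : 2 * i ≤ N) (L0 : Fin i → Fin i → Fin i)
    (hrow : ∀ r, Injective (L0 r)) : ∀ r, Injective (baseRect i N h L0 r) := by
  intro r c1 c2 hc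
  unfold baseRect at hc
  have hN : 0 < N := c1.pos
  have hc1N := c1.isLt
  have hc2N := c2.isLt
  by_cases h1 : (c1 : ℕ) < i <;> by_cases h2 : (c2 : ℕ) < i
  · rw [dif_pos h1, dif_pos h2] at hc
    have hv := congrArg Fin.val hc
    simp only at hv
    have := hrow r (Fin.ext hv : L0 r ⟨c1.1, h1⟩ = L0 r ⟨c2.1, h2⟩)
    have := congrArg Fin.val this
    simp only at this
    exact Fin.ext this
  · rw [dif_pos h1, dif_neg h2] at hc
    have hv := congrArg Fin.val hc
    simp only at hv
    have := (L0 r ⟨c1.1, h1⟩).isLt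
    omega
  · rw [dif_neg h1, dif_pos h2] at hc
    have hv := congrArg Fin.val hc
    simp only at hv
    have := (L0 r ⟨c2.1, h2⟩).isLt
    omega
  · rw [dif_neg h1, dif_neg h2] at hc
    have hv := congrArg Fin.val hc
    simp only [Nat.add_right_cancel_iff] at hv
    have hlt1 : c1.1 - i < N - i := by omega
    have hlt2 : c2.1 - i < N - i := by omega
    have := mod_cancel_right hlt1 hlt2 (by omega : (r.1 + (c1.1 - i)) % (N - i) = (r.1 + (c2.1 - i)) % (N - i))
    exact Fin.ext (by omega)

lemma baseRect_col_inj {i N : ℕ} (h : 2 * i ≤ N) (L0 : Fin i → Fin i → Fin i)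
    (hcol : ∀ c, Injective fun r => L0 r c) :
    ∀ c, Injective fun r => baseRect i N h L0 r c := by
  intro c r1 r2 hr
  simp only [baseRect] at hr
  have hN : 0 < N := c.pos
  by_cases h1 : (c : ℕ) < i
  · rw [dif_pos h1, dif_pos h1] at hr
    have hv := congrArg Fin.val hr
    simp only at hv
    exact hcol ⟨c.1, h1⟩ (Fin.ext hv : L0 r1 ⟨c.1, h1⟩ = L0 r2 ⟨c.1, h1⟩)
  · rw [dif_neg h1, dif_neg h1] at hr
    have hv := congrArg Fin.val hr
    simp only at hv
    have hlt1 : r1.1 < N - i := by have := r1.isLt; omega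
    have hlt2 : r2.1 < N - i := by have := r2.isLt; omega
    have hv' : (r1.1 + (c.1 - i)) % (N - i) = (r2.1 + (c.1 - i)) % (N - i) := by omega
    exact Fin.ext (mod_cancel_left hlt1 hlt2 hv')

lemma embed (μ i N : ℕ) (hμ0 : 0 < μ) (hiN : 2 * i ≤ N)
    (L : Fin μ → Fin i → Fin i → Fin i) (hL : IsMuWayLatinSquare L) :
    ∃ M : Fin μ → Fin N → Fin N → Fin N, IsMuWayLatinSquare M ∧
      numFixed M = numFixed L + (N ^ 2 - i ^ 2) := by
  obtain ⟨hLrow, hLcol, hLcell⟩ := hL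
  set L0 := L ⟨0, hμ0⟩ with hL0
  obtain ⟨Q, hQrow, hQcol, hQtop⟩ := exists_complete N (N - i) i (by omega)
    (baseRect i N hiN L0) (baseRect_row_inj hiN L0 (hLrow _)) (baseRect_col_inj hiN L0 (hLcol _))
  have hiN' : i ≤ N := by omega
  -- the i×i corner of Q is L0
  have hcorner : ∀ (r c : Fin N) (hri : r.1 < i) (hci : c.1 < i),
      Q r c = ⟨(L0 ⟨r.1, hri⟩ ⟨c.1, hci⟩ : ℕ), by have := (L0 ⟨r.1, hri⟩ ⟨c.1, hci⟩).isLt; omega⟩ := by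
    intro r c hri hci
    have h1 := hQtop ⟨r.1, hri⟩ c
    have hrr : (⟨(⟨r.1, hri⟩ : Fin i).1, _⟩ : Fin N) = r := Fin.ext rfl
    rw [hrr] at h1
    rw [h1, baseRect, dif_pos hci]
  have hright : ∀ (r c : Fin N) (hri : r.1 < i) (hci : ¬ c.1 < i), i ≤ (Q r c).1 := by
    intro r c hri hci
    have h1 := hQtop ⟨r.1, hri⟩ c
    have hrr : (⟨(⟨r.1, hri⟩ : Fin i).1, _⟩ : Fin N) = r := Fin.ext rfl
    rw [hrr] at h1
    rw [h1, baseRect, dif_neg hci]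
    simp
  have hbelow : ∀ (r c : Fin N) (hri : ¬ r.1 < i) (hci : c.1 < i), i ≤ (Q r c).1 := by
    intro r c hri hci
    by_contra hlt
    push_neg at hlt
    -- L0's column hci is surjective onto Fin i
    have hbij : Bijective (fun p => L0 p ⟨c.1, hci⟩) := (Finite.injective_iff_bijective).1 (hLcol _ _)
    obtain ⟨p, hp⟩ := hbij.2 ⟨(Q r c).1, hlt⟩
    have h1 := hcorner ⟨p.1, lt_of_lt_of_le p.isLt hiN'⟩ c (by exact p.isLt) hci
    have hpp : (⟨(⟨p.1, lt_of_lt_of_le p.isLt hiN'⟩ : Fin N).1, p.isLt⟩ : Fin i) = p := Fin.ext rfl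
    simp only [hpp] at h1
    have hp' : L0 p ⟨c.1, hci⟩ = ⟨(Q r c).1, hlt⟩ := hp
    simp only [hp'] at h1
    have heq : Q ⟨p.1, lt_of_lt_of_le p.isLt hiN'⟩ c = Q r c := by
      rw [h1]
    have := hQcol c heq
    have := congrArg Fin.val this
    simp only at this
    omega
  set Mf : Fin μ → Fin N → Fin N → Fin N := fun m r c =>
    if hrc : r.1 < i ∧ c.1 < i then
      ⟨(L m ⟨r.1, hrc.1⟩ ⟨c.1, hrc.2⟩ : ℕ), by
        have := (L m ⟨r.1, hrc.1⟩ ⟨c.1, hrc.2⟩).isLt; omega⟩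
    else Q r c with hMf
  have hMin : ∀ (m : Fin μ) (r c : Fin N) (hri : r.1 < i) (hci : c.1 < i),
      Mf m r c = ⟨(L m ⟨r.1, hri⟩ ⟨c.1, hci⟩ : ℕ), by
        have := (L m ⟨r.1, hri⟩ ⟨c.1, hci⟩).isLt; omega⟩ := by
    intro m r c hri hci
    simp only [hMf]
    rw [dif_pos ⟨hri, hci⟩]
  have hMout : ∀ (m : Fin μ) (r c : Fin N), ¬(r.1 < i ∧ c.1 < i) → Mf m r c = Q r c := by
    intro m r c h
    simp only [hMf]
    rw [dif_neg h]
  refine ⟨Mf, ⟨?_, ?_, ?_⟩, ?_⟩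
  · -- rows injective
    intro m r c1 c2 h
    by_cases hri : r.1 < i
    · by_cases hc1 : c1.1 < i <;> by_cases hc2 : c2.1 < i
      · rw [hMin m r c1 hri hc1, hMin m r c2 hri hc2] at h
        have hv := congrArg Fin.val h
        simp only at hv
        have := hLrow m ⟨r.1, hri⟩ (Fin.ext hv : L m ⟨r.1, hri⟩ ⟨c1.1, hc1⟩ = L m ⟨r.1, hri⟩ ⟨c2.1, hc2⟩)
        have h2 := congrArg Fin.val this
        apply Fin.ext
        exact h2
      · rw [hMin m r c1 hri hc1, hMout m r c2 (by tauto)] at h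
        have hv := congrArg Fin.val h
        simp only at hv
        have h1 := hright r c2 hri hc2
        have h2 := (L m ⟨r.1, hri⟩ ⟨c1.1, hc1⟩).isLt
        omega
      · rw [hMout m r c1 (by tauto), hMin m r c2 hri hc2] at h
        have hv := congrArg Fin.val h
        simp only at hv
        have h1 := hright r c1 hri hc1
        have h2 := (L m ⟨r.1, hri⟩ ⟨c2.1, hc2⟩).isLt
        omega
      · rw [hMout m r c1 (by tauto), hMout m r c2 (by tauto)] at h
        exact hQrow r h
    · rw [hMout m r c1 (by tauto), hMout m r c2 (by tauto)] at h
      exact hQrow r h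
  · -- columns injective
    intro m c r1 r2 h
    simp only at h
    by_cases hci : c.1 < i
    · by_cases hr1 : r1.1 < i <;> by_cases hr2 : r2.1 < i
      · rw [hMin m r1 c hr1 hci, hMin m r2 c hr2 hci] at h
        have hv := congrArg Fin.val h
        simp only at hv
        have := hLcol m ⟨c.1, hci⟩
          (Fin.ext hv : L m ⟨r1.1, hr1⟩ ⟨c.1, hci⟩ = L m ⟨r2.1, hr2⟩ ⟨c.1, hci⟩)
        have h2 := congrArg Fin.val this
        apply Fin.ext
        exact h2
      · rw [hMin m r1 c hr1 hci, hMout m r2 c (by tauto)] at h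
        have hv := congrArg Fin.val h
        simp only at hv
        have h1 := hbelow r2 c hr2 hci
        have h2 := (L m ⟨r1.1, hr1⟩ ⟨c.1, hci⟩).isLt
        omega
      · rw [hMout m r1 c (by tauto), hMin m r2 c hr2 hci] at h
        have hv := congrArg Fin.val h
        simp only at hv
        have h1 := hbelow r1 c hr1 hci
        have h2 := (L m ⟨r2.1, hr2⟩ ⟨c.1, hci⟩).isLt
        omega
      · rw [hMout m r1 c (by tauto), hMout m r2 c (by tauto)] at h
        exact hQcol c h
    · rw [hMout m r1 c (by tauto), hMout m r2 c (by tauto)] at h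
      exact hQcol c h
  · -- cell condition
    intro r c
    by_cases hrc : r.1 < i ∧ c.1 < i
    · rcases hLcell ⟨r.1, hrc.1⟩ ⟨c.1, hrc.2⟩ with hf | hi
      · refine Or.inl fun a b => ?_
        rw [hMin a r c hrc.1 hrc.2, hMin b r c hrc.1 hrc.2]
        have h2 := congrArg Fin.val (hf a b)
        apply Fin.ext
        exact h2
      · refine Or.inr fun a b hab => ?_
        simp only at hab
        rw [hMin a r c hrc.1 hrc.2, hMin b r c hrc.1 hrc.2] at hab
        have hv := congrArg Fin.val hab
        simp only at hv
        exact hi (Fin.ext hv)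
    · exact Or.inl fun a b => by rw [hMout a r c hrc, hMout b r c hrc]
  · -- counting
    have hfix_in : ∀ (r c : Fin i),
        IsFixedCell Mf ⟨r.1, lt_of_lt_of_le r.isLt hiN'⟩ ⟨c.1, lt_of_lt_of_le c.isLt hiN'⟩ ↔
          IsFixedCell L r c := by
      intro r c
      unfold IsFixedCell
      constructor
      · intro h a b
        have h1 := h a b
        rw [hMin a _ _ r.isLt c.isLt, hMin b _ _ r.isLt c.isLt] at h1
        have hv := congrArg Fin.val h1
        simp only at hv
        exact Fin.ext hv
      · intro h a b
        rw [hMin a _ _ r.isLt c.isLt, hMin b _ _ r.isLt c.isLt]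
        have h2 := congrArg Fin.val (h a b)
        apply Fin.ext
        exact h2
    have hfix_out : ∀ (p : Fin N × Fin N), ¬(p.1.1 < i ∧ p.2.1 < i) → IsFixedCell Mf p.1 p.2 := by
      intro p hp a b
      rw [hMout a _ _ hp, hMout b _ _ hp]
    have split1 := Finset.card_filter_add_card_filter_not
      (s := Finset.univ.filter fun p : Fin N × Fin N => IsFixedCell Mf p.1 p.2)
      (p := fun p : Fin N × Fin N => p.1.1 < i ∧ p.2.1 < i)
    have hA : (((Finset.univ.filter fun p : Fin N × Fin N => IsFixedCell Mf p.1 p.2)).filter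
        fun p : Fin N × Fin N => p.1.1 < i ∧ p.2.1 < i).card = numFixed L := by
      rw [numFixed]
      symm
      apply Finset.card_bij (fun (p : Fin i × Fin i) _ =>
        ((⟨p.1.1, lt_of_lt_of_le p.1.isLt hiN'⟩ : Fin N), (⟨p.2.1, lt_of_lt_of_le p.2.isLt hiN'⟩ : Fin N)))
      · intro p hp
        simp only [mem_filter, mem_univ, true_and] at hp ⊢
        exact ⟨(hfix_in p.1 p.2).2 hp, p.1.isLt, p.2.isLt⟩
      · intro p1 h1 p2 h2 h12
        have e1 := congrArg (fun q : Fin N × Fin N => (q.1.1, q.2.1)) h12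
        simp only at e1
        exact Prod.ext (Fin.ext (congrArg Prod.fst e1)) (Fin.ext (congrArg Prod.snd e1))
      · intro p hp
        simp only [mem_filter, mem_univ, true_and] at hp
        obtain ⟨hfix, hp1, hp2⟩ := hp
        refine ⟨(⟨p.1.1, hp1⟩, ⟨p.2.1, hp2⟩), ?_, ?_⟩
        · simp only [mem_filter, mem_univ, true_and]
          exact (hfix_in ⟨p.1.1, hp1⟩ ⟨p.2.1, hp2⟩).1 hfix
        · exact Prod.ext (Fin.ext rfl) (Fin.ext rfl)
    have hB : (((Finset.univ.filter fun p : Fin N × Fin N => IsFixedCell Mf p.1 p.2)).filter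
        fun p : Fin N × Fin N => ¬(p.1.1 < i ∧ p.2.1 < i)).card = N * N - i * i := by
      have heq : ((Finset.univ.filter fun p : Fin N × Fin N => IsFixedCell Mf p.1 p.2)).filter
          (fun p : Fin N × Fin N => ¬(p.1.1 < i ∧ p.2.1 < i))
          = Finset.univ.filter fun p : Fin N × Fin N => ¬(p.1.1 < i ∧ p.2.1 < i) := by
        ext p
        simp only [mem_filter, mem_univ, true_and]
        exact ⟨fun h => h.2, fun h => ⟨hfix_out p h, h⟩⟩
      rw [heq]
      have split2 := Finset.card_filter_add_card_filter_not
        (s := (Finset.univ : Finset (Fin N × Fin N)))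
        (p := fun p : Fin N × Fin N => p.1.1 < i ∧ p.2.1 < i)
      rw [card_univ, Fintype.card_prod, Fintype.card_fin] at split2
      have hQp : ((Finset.univ : Finset (Fin N × Fin N)).filter
          fun p : Fin N × Fin N => p.1.1 < i ∧ p.2.1 < i).card = i * i := by
        have hprod : (Finset.univ : Finset (Fin N × Fin N)).filter
            (fun p : Fin N × Fin N => p.1.1 < i ∧ p.2.1 < i)
            = (Finset.univ.filter fun x : Fin N => (x : ℕ) < i) ×ˢ
              (Finset.univ.filter fun x : Fin N => (x : ℕ) < i) := by
          ext p
          simp only [mem_filter, mem_univ, true_and, Finset.mem_product]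
        rw [hprod]
        rw [Finset.card_product]
        rw [card_filter_val_lt N i hiN']
      omega
    rw [numFixed]
    have e2 : N ^ 2 = N * N := by ring
    have e3 : i ^ 2 = i * i := by ring
    rw [e2, e3]
    omega



lemma numFixed_eq_sum {μ k : ℕ} (L : Fin μ → Fin k → Fin k → Fin k) :
    numFixed L = ∑ a : Fin k, ∑ b : Fin k, if IsFixedCell L a b then 1 else 0 := by
  rw [numFixed, Finset.card_filter, Fintype.sum_prod_type]

lemma castAdd_inj {n : ℕ} {x y : Fin n} (h : Fin.castAdd n x = Fin.castAdd n y) : x = y := by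
  have := congrArg Fin.val h
  simp only [Fin.coe_castAdd] at this
  exact Fin.ext this

lemma natAdd_inj {n : ℕ} {x y : Fin n} (h : Fin.natAdd n x = Fin.natAdd n y) : x = y := by
  have := congrArg Fin.val h
  simp only [Fin.coe_natAdd] at this
  exact Fin.ext (by omega)

lemma castAdd_ne_natAdd {n : ℕ} (x y : Fin n) : Fin.castAdd n x ≠ Fin.natAdd n y := by
  intro h
  have := congrArg Fin.val h
  simp only [Fin.coe_castAdd, Fin.coe_natAdd] at this
  have := x.isLt
  omega

lemma fin_add_cases {n : ℕ} (r : Fin (n + n)) :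
    (∃ a : Fin n, r = Fin.castAdd n a) ∨ ∃ a : Fin n, r = Fin.natAdd n a := by
  by_cases h : r.1 < n
  · exact Or.inl ⟨⟨r.1, h⟩, Fin.ext rfl⟩
  · refine Or.inr ⟨⟨r.1 - n, by have := r.isLt; omega⟩, Fin.ext ?_⟩
    simp only [Fin.coe_natAdd]
    omega

variable {μ n : ℕ} (L1 L2 L3 L4 : Fin μ → Fin n → Fin n → Fin n)

def blockSq : Fin μ → Fin (n + n) → Fin (n + n) → Fin (n + n) := fun m r c =>
  if hr : r.1 < n then
    if hc : c.1 < n then Fin.castAdd n (L1 m ⟨r.1, hr⟩ ⟨c.1, hc⟩)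
    else Fin.natAdd n (L2 m ⟨r.1, hr⟩ ⟨c.1 - n, by have := c.isLt; omega⟩)
  else
    if hc : c.1 < n then Fin.natAdd n (L3 m ⟨r.1 - n, by have := r.isLt; omega⟩ ⟨c.1, hc⟩)
    else Fin.castAdd n
      (L4 m ⟨r.1 - n, by have := r.isLt; omega⟩ ⟨c.1 - n, by have := c.isLt; omega⟩)

lemma blockSq_cc (m : Fin μ) (a b : Fin n) :
    blockSq L1 L2 L3 L4 m (Fin.castAdd n a) (Fin.castAdd n b) = Fin.castAdd n (L1 m a b) := by
  unfold blockSq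
  rw [dif_pos (show (Fin.castAdd n a).1 < n from a.isLt),
    dif_pos (show (Fin.castAdd n b).1 < n from b.isLt)]
  rfl

lemma blockSq_cn (m : Fin μ) (a b : Fin n) :
    blockSq L1 L2 L3 L4 m (Fin.castAdd n a) (Fin.natAdd n b) = Fin.natAdd n (L2 m a b) := by
  unfold blockSq
  rw [dif_pos (show (Fin.castAdd n a).1 < n from a.isLt),
    dif_neg (show ¬ (Fin.natAdd n b).1 < n by simp)]
  refine congrArg _ (congrArg₂ (L2 m) (Fin.ext rfl) (Fin.ext ?_))
  simp

lemma blockSq_nc (m : Fin μ) (a b : Fin n) :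
    blockSq L1 L2 L3 L4 m (Fin.natAdd n a) (Fin.castAdd n b) = Fin.natAdd n (L3 m a b) := by
  unfold blockSq
  rw [dif_neg (show ¬ (Fin.natAdd n a).1 < n by simp),
    dif_pos (show (Fin.castAdd n b).1 < n from b.isLt)]
  refine congrArg _ (congrArg₂ (L3 m) (Fin.ext ?_) (Fin.ext rfl))
  simp

lemma blockSq_nn (m : Fin μ) (a b : Fin n) :
    blockSq L1 L2 L3 L4 m (Fin.natAdd n a) (Fin.natAdd n b) = Fin.castAdd n (L4 m a b) := by
  unfold blockSq
  rw [dif_neg (show ¬ (Fin.natAdd n a).1 < n by simp),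
    dif_neg (show ¬ (Fin.natAdd n b).1 < n by simp)]
  refine congrArg _ (congrArg₂ (L4 m) (Fin.ext ?_) (Fin.ext ?_)) <;> simp

lemma fixed_cc (a b : Fin n) :
    IsFixedCell (blockSq L1 L2 L3 L4) (Fin.castAdd n a) (Fin.castAdd n b) ↔
      IsFixedCell L1 a b := by
  unfold IsFixedCell
  simp only [blockSq_cc]
  exact ⟨fun h x y => castAdd_inj (h x y), fun h x y => congrArg _ (h x y)⟩

lemma fixed_cn (a b : Fin n) :
    IsFixedCell (blockSq L1 L2 L3 L4) (Fin.castAdd n a) (Fin.natAdd n b) ↔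
      IsFixedCell L2 a b := by
  unfold IsFixedCell
  simp only [blockSq_cn]
  exact ⟨fun h x y => natAdd_inj (h x y), fun h x y => congrArg _ (h x y)⟩

lemma fixed_nc (a b : Fin n) :
    IsFixedCell (blockSq L1 L2 L3 L4) (Fin.natAdd n a) (Fin.castAdd n b) ↔
      IsFixedCell L3 a b := by
  unfold IsFixedCell
  simp only [blockSq_nc]
  exact ⟨fun h x y => natAdd_inj (h x y), fun h x y => congrArg _ (h x y)⟩

lemma fixed_nn (a b : Fin n) :
    IsFixedCell (blockSq L1 L2 L3 L4) (Fin.natAdd n a) (Fin.natAdd n b) ↔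
      IsFixedCell L4 a b := by
  unfold IsFixedCell
  simp only [blockSq_nn]
  exact ⟨fun h x y => castAdd_inj (h x y), fun h x y => congrArg _ (h x y)⟩

lemma four_blocks
    (h1 : IsMuWayLatinSquare L1) (h2 : IsMuWayLatinSquare L2)
    (h3 : IsMuWayLatinSquare L3) (h4 : IsMuWayLatinSquare L4) :
    ∃ M : Fin μ → Fin (n + n) → Fin (n + n) → Fin (n + n), IsMuWayLatinSquare M ∧
      numFixed M = numFixed L1 + numFixed L2 + numFixed L3 + numFixed L4 := by
  obtain ⟨h1r, h1c, h1f⟩ := h1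
  obtain ⟨h2r, h2c, h2f⟩ := h2
  obtain ⟨h3r, h3c, h3f⟩ := h3
  obtain ⟨h4r, h4c, h4f⟩ := h4
  refine ⟨blockSq L1 L2 L3 L4, ⟨?_, ?_, ?_⟩, ?_⟩
  · -- rows injective
    intro m r c1 c2 h
    rcases fin_add_cases r with ⟨a, rfl⟩ | ⟨a, rfl⟩ <;>
      rcases fin_add_cases c1 with ⟨b1, rfl⟩ | ⟨b1, rfl⟩ <;>
        rcases fin_add_cases c2 with ⟨b2, rfl⟩ | ⟨b2, rfl⟩ <;>
      simp only [blockSq_cc, blockSq_cn, blockSq_nc, blockSq_nn] at h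
    · exact congrArg _ (h1r m a (castAdd_inj h))
    · exact absurd h (castAdd_ne_natAdd _ _)
    · exact absurd h.symm (castAdd_ne_natAdd _ _)
    · exact congrArg _ (h2r m a (natAdd_inj h))
    · exact congrArg _ (h3r m a (natAdd_inj h))
    · exact absurd h.symm (castAdd_ne_natAdd _ _)
    · exact absurd h (castAdd_ne_natAdd _ _)
    · exact congrArg _ (h4r m a (castAdd_inj h))
  · -- columns injective
    intro m c r1 r2 h
    simp only at h
    rcases fin_add_cases c with ⟨b, rfl⟩ | ⟨b, rfl⟩ <;>
      rcases fin_add_cases r1 with ⟨a1, rfl⟩ | ⟨a1, rfl⟩ <;>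
        rcases fin_add_cases r2 with ⟨a2, rfl⟩ | ⟨a2, rfl⟩ <;>
      simp only [blockSq_cc, blockSq_cn, blockSq_nc, blockSq_nn] at h
    · exact congrArg _ (h1c m b (castAdd_inj h))
    · exact absurd h (castAdd_ne_natAdd _ _)
    · exact absurd h.symm (castAdd_ne_natAdd _ _)
    · exact congrArg _ (h3c m b (natAdd_inj h))
    · exact congrArg _ (h2c m b (natAdd_inj h))
    · exact absurd h.symm (castAdd_ne_natAdd _ _)
    · exact absurd h (castAdd_ne_natAdd _ _)
    · exact congrArg _ (h4c m b (castAdd_inj h))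
  · -- cell condition
    intro r c
    rcases fin_add_cases r with ⟨a, rfl⟩ | ⟨a, rfl⟩ <;>
      rcases fin_add_cases c with ⟨b, rfl⟩ | ⟨b, rfl⟩
    · rcases h1f a b with hf | hi
      · exact Or.inl fun x y => by simp only [blockSq_cc]; exact congrArg _ (hf x y)
      · exact Or.inr fun x y hxy => by
          simp only [blockSq_cc] at hxy; exact hi (castAdd_inj hxy)
    · rcases h2f a b with hf | hi
      · exact Or.inl fun x y => by simp only [blockSq_cn]; exact congrArg _ (hf x y)
      · exact Or.inr fun x y hxy => by
          simp only [blockSq_cn] at hxy; exact hi (natAdd_inj hxy)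
    · rcases h3f a b with hf | hi
      · exact Or.inl fun x y => by simp only [blockSq_nc]; exact congrArg _ (hf x y)
      · exact Or.inr fun x y hxy => by
          simp only [blockSq_nc] at hxy; exact hi (natAdd_inj hxy)
    · rcases h4f a b with hf | hi
      · exact Or.inl fun x y => by simp only [blockSq_nn]; exact congrArg _ (hf x y)
      · exact Or.inr fun x y hxy => by
          simp only [blockSq_nn] at hxy; exact hi (castAdd_inj hxy)
  · -- counting
    rw [numFixed_eq_sum]
    simp only [Fin.sum_univ_add]
    simp only [fixed_cc, fixed_cn, fixed_nc, fixed_nn]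
    rw [numFixed_eq_sum L1, numFixed_eq_sum L2, numFixed_eq_sum L3, numFixed_eq_sum L4]
    simp only [Finset.sum_add_distrib]
    omega


end Stmt10Aux

open Pointwise in
theorem stmt_10 (μ n : ℕ) (hn : 1 ≤ n) (hμ : 2 ≤ μ) :
    (Spectrum μ n + Spectrum μ n + Spectrum μ n + Spectrum μ n) ∪
      (⋃ i ∈ Set.Icc 1 n, (Spectrum μ i + ({(2 * n) ^ 2 - i ^ 2} : Set ℕ))) ⊆
    Spectrum μ (2 * n) := by
  intro k hk
  rcases hk with hk | hk
  · obtain ⟨x, hx, d, hd, rfl⟩ := Set.mem_add.1 hk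
    obtain ⟨y, hy, c, hc, rfl⟩ := Set.mem_add.1 hx
    obtain ⟨a, ha, b, hb, rfl⟩ := Set.mem_add.1 hy
    obtain ⟨L1, hL1, hn1⟩ := ha
    obtain ⟨L2, hL2, hn2⟩ := hb
    obtain ⟨L3, hL3, hn3⟩ := hc
    obtain ⟨L4, hL4, hn4⟩ := hd
    obtain ⟨M, hM, hMc⟩ := Stmt10Aux.four_blocks L1 L2 L3 L4 hL1 hL2 hL3 hL4
    rw [two_mul]
    exact ⟨M, hM, by rw [hMc, hn1, hn2, hn3, hn4]⟩
  · simp only [Set.mem_iUnion] at hk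
    obtain ⟨i, hi, hk⟩ := hk
    rw [Set.mem_Icc] at hi
    obtain ⟨a, ha, c, hc, rfl⟩ := Set.mem_add.1 hk
    rw [Set.mem_singleton_iff] at hc
    subst hc
    obtain ⟨L, hL, rfl⟩ := ha
    obtain ⟨M, hM, hMc⟩ := Stmt10Aux.embed μ i (2 * n) (by omega) (by omega) L hL
    exact ⟨M, hM, hMc⟩
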